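/- Let P, Q be orthogonal projections on a complex Hilbert space 𝔥 whose ranges 𝔭, 𝔮 are in generic position, and suppose ‖PQ‖ = ‖P^⊥Q‖ = 1. Then 1 is in the spectrum of A := (QP^⊥Q)|_𝔮 but is not an eigenvalue, and consequently P𝔮 is a proper dense subspace of 𝔭; i.e. the map P: 𝔮 → 𝔭 is injective with dense, non-closed range and unbounded inverse. -/

import Mathlib

open scoped ComplexInnerProductSpace

set_option maxHeartbeats 1000000 in
/-- Proposition 4.6 (`Fall=1`), for the map (6): if `𝔭, 𝔮` are in generic position and
`‖PQ‖ = ‖P⊥Q‖ = 1`, then `1` lies in the spectrum of `A = QP⊥Q` restricted to `𝔮` but is not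
an eigenvalue, and `P𝔮` is a proper dense (hence non-closed) subspace of `𝔭`; in particular
`P : 𝔮 → 𝔭` is injective with dense non-closed range, i.e. it has an unbounded inverse. -/
theorem proper_dense_image_of_norm_eq_one
    {E : Type*} [NormedAddCommGroup E] [InnerProductSpace ℂ E] [CompleteSpace E]
    (P : E →L[ℂ] E) (hP_proj : P ∘L P = P) (hP_sa : IsSelfAdjoint P)
    (Q : E →L[ℂ] E) (hQ_proj : Q ∘L Q = Q) (hQ_sa : IsSelfAdjoint Q)
    (hgen1 : LinearMap.range (P : E →ₗ[ℂ] E) ⊓ LinearMap.range (Q : E →ₗ[ℂ] E) = ⊥)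
    (hgen2 : LinearMap.range (P : E →ₗ[ℂ] E) ⊓ (LinearMap.range (Q : E →ₗ[ℂ] E))ᗮ = ⊥)
    (hgen3 : (LinearMap.range (P : E →ₗ[ℂ] E))ᗮ ⊓ LinearMap.range (Q : E →ₗ[ℂ] E) = ⊥)
    (hgen4 : (LinearMap.range (P : E →ₗ[ℂ] E))ᗮ ⊓ (LinearMap.range (Q : E →ₗ[ℂ] E))ᗮ = ⊥)
    (hδ : ‖P ∘L Q‖ = 1) (hδ' : ‖(1 - P) ∘L Q‖ = 1)
    -- `A` is the restriction of `Q P⊥ Q` to the subspace `𝔮 = ran Q`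
    (A : ↥(LinearMap.range (Q : E →ₗ[ℂ] E)) →L[ℂ] ↥(LinearMap.range (Q : E →ₗ[ℂ] E)))
    (hA : ∀ x : ↥(LinearMap.range (Q : E →ₗ[ℂ] E)), (A x : E) = Q ((1 - P) (x : E))) :
    (1 : ℂ) ∈ spectrum ℂ A ∧
    (∀ x : ↥(LinearMap.range (Q : E →ₗ[ℂ] E)), A x = x → x = 0) ∧
    Set.InjOn P (LinearMap.range (Q : E →ₗ[ℂ] E) : Set E) ∧
    closure (P '' (LinearMap.range (Q : E →ₗ[ℂ] E) : Set E)) = (LinearMap.range (P : E →ₗ[ℂ] E) : Set E) ∧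
    P '' (LinearMap.range (Q : E →ₗ[ℂ] E) : Set E) ≠ (LinearMap.range (P : E →ₗ[ℂ] E) : Set E) ∧
    ¬ IsClosed (P '' (LinearMap.range (Q : E →ₗ[ℂ] E) : Set E)) := by
  have hPsym : ∀ x y : E, ⟪P x, y⟫ = ⟪x, P y⟫ := fun x y => hP_sa.isSymmetric x y
  have hQsym : ∀ x y : E, ⟪Q x, y⟫ = ⟪x, Q y⟫ := fun x y => hQ_sa.isSymmetric x y
  have hPP : ∀ x : E, P (P x) = P x := fun x => by
    have := ContinuousLinearMap.ext_iff.mp hP_proj x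
    simpa using this
  have hQQ : ∀ x : E, Q (Q x) = Q x := fun x => by
    have := ContinuousLinearMap.ext_iff.mp hQ_proj x
    simpa using this
  have hQfix : ∀ x : E, x ∈ LinearMap.range (Q : E →ₗ[ℂ] E) → Q x = x := by
    rintro _ ⟨y, rfl⟩; exact hQQ y
  -- Pythagoras for a self-adjoint idempotent
  have pyth : ∀ (R : E →L[ℂ] E), (∀ x, R (R x) = R x) →
      (∀ x y : E, ⟪R x, y⟫ = ⟪x, R y⟫) → ∀ x : E, ‖R x‖^2 + ‖x - R x‖^2 = ‖x‖^2 := by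
    intro R hRR hRsym x
    have h0 : ⟪R x, x - R x⟫ = 0 := by
      rw [inner_sub_right]
      have h1 : ⟪R x, R x⟫ = ⟪x, R x⟫ := by
        have := hRsym x (R x)
        rw [this, hRR]
      rw [h1, hRsym x x, sub_self]
    have hns := norm_add_sq (𝕜 := ℂ) (R x) (x - R x)
    simp only [h0, map_zero, mul_zero, add_zero] at hns
    have hx : R x + (x - R x) = x := by abel
    rw [hx] at hns
    linarith
  have pythP := pyth P hPP hPsym
  have pythQ := pyth Q hQQ hQsym
  have hPle : ∀ x : E, ‖P x‖ ≤ ‖x‖ := by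
    intro x
    nlinarith [pythP x, norm_nonneg (x - P x), norm_nonneg (P x), norm_nonneg x]
  have hQle : ∀ x : E, ‖Q x‖ ≤ ‖x‖ := by
    intro x
    nlinarith [pythQ x, norm_nonneg (x - Q x), norm_nonneg (Q x), norm_nonneg x]
  -- kernel vs orthogonal complement of range
  have hkerP : ∀ x : E, P x = 0 → x ∈ (LinearMap.range (P : E →ₗ[ℂ] E))ᗮ := by
    intro x hx
    rw [Submodule.mem_orthogonal]
    rintro _ ⟨v, rfl⟩
    rw [ContinuousLinearMap.coe_coe, hPsym, hx, inner_zero_right]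
  have hkerQorth : ∀ x : E, Q x = 0 → x ∈ (LinearMap.range (Q : E →ₗ[ℂ] E))ᗮ := by
    intro x hx
    rw [Submodule.mem_orthogonal]
    rintro _ ⟨v, rfl⟩
    rw [ContinuousLinearMap.coe_coe, hQsym, hx, inner_zero_right]
  -- range Q is nontrivial
  have hQne : LinearMap.range (Q : E →ₗ[ℂ] E) ≠ ⊥ := by
    intro h
    have hQ0 : Q = 0 := by
      ext y
      have hm : Q y ∈ LinearMap.range (Q : E →ₗ[ℂ] E) := LinearMap.mem_range_self _ y
      rw [h] at hm
      simpa using hm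
    rw [hQ0] at hδ'
    simp at hδ'
  -- key quantitative lemma
  have key : ∀ c : ℝ, 0 < c → (∀ x : E, x ∈ LinearMap.range (Q : E →ₗ[ℂ] E) → c * ‖x‖ ≤ ‖P x‖) → False := by
    intro c hc hbd
    set d : ℝ := min c 1 with hd
    have hd0 : 0 < d := lt_min hc one_pos
    have hd1 : d ≤ 1 := min_le_right _ _
    have hnn : (0:ℝ) ≤ 1 - d^2 := by nlinarith
    have hbd' : ∀ x : E, x ∈ LinearMap.range (Q : E →ₗ[ℂ] E) → d * ‖x‖ ≤ ‖P x‖ := by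
      intro x hx
      have h1 := min_le_left c 1
      have h2 := hbd x hx
      nlinarith [norm_nonneg x]
    have hop : ‖(1 - P) ∘L Q‖ ≤ Real.sqrt (1 - d^2) := by
      apply ContinuousLinearMap.opNorm_le_bound _ (Real.sqrt_nonneg _)
      intro y
      have happ : ((1 - P) ∘L Q) y = Q y - P (Q y) := by
        simp [ContinuousLinearMap.sub_apply]
      rw [happ]
      have h1 : ‖Q y - P (Q y)‖^2 ≤ (1 - d^2) * ‖y‖^2 := by
        have h2 : d * ‖Q y‖ ≤ ‖P (Q y)‖ := hbd' _ (LinearMap.mem_range_self _ y)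
        have h3 := pythP (Q y)
        have h4 := hQle y
        have e1 : d^2 * ‖Q y‖^2 ≤ ‖P (Q y)‖^2 := by
          nlinarith [norm_nonneg (Q y), norm_nonneg (P (Q y)), mul_nonneg hd0.le (norm_nonneg (Q y))]
        have e2 : ‖Q y‖^2 ≤ ‖y‖^2 := by nlinarith [norm_nonneg (Q y)]
        have e3 : (0:ℝ) ≤ (1 - d^2) * (‖y‖^2 - ‖Q y‖^2) := mul_nonneg hnn (by linarith)
        nlinarith [e1, e2, e3]
      calc ‖Q y - P (Q y)‖ = Real.sqrt (‖Q y - P (Q y)‖^2) := (Real.sqrt_sq (norm_nonneg _)).symm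
        _ ≤ Real.sqrt ((1 - d^2) * ‖y‖^2) := Real.sqrt_le_sqrt h1
        _ = Real.sqrt (1 - d^2) * ‖y‖ := by
            rw [Real.sqrt_mul hnn, Real.sqrt_sq (norm_nonneg y)]
    rw [hδ'] at hop
    have : Real.sqrt (1 - d^2) < 1 := by
      have h1 : 1 - d^2 < 1 := by nlinarith
      calc Real.sqrt (1 - d^2) < Real.sqrt 1 := Real.sqrt_lt_sqrt hnn h1
        _ = 1 := Real.sqrt_one
    linarith
  -- existence of a nonzero element of ran Q
  obtain ⟨x₀, hx₀mem, hx₀ne⟩ := Submodule.exists_mem_ne_zero_of_ne_bot hQne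
  -- (1): 1 ∈ spectrum A
  have hspec : (1 : ℂ) ∈ spectrum ℂ A := by
    rw [spectrum.mem_iff]
    intro hU
    obtain ⟨u, hu⟩ := hU
    set B : ↥(LinearMap.range (Q : E →ₗ[ℂ] E)) →L[ℂ] ↥(LinearMap.range (Q : E →ₗ[ℂ] E)) := ↑u⁻¹ with hB
    have hBA : ∀ x : ↥(LinearMap.range (Q : E →ₗ[ℂ] E)), B ((1 - A) x) = x := by
      intro x
      have h1 : (↑u⁻¹ * ↑u : ↥(LinearMap.range (Q : E →ₗ[ℂ] E)) →L[ℂ] ↥(LinearMap.range (Q : E →ₗ[ℂ] E))) x = x := by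
        rw [u.inv_mul]; rfl
      have h2 : (↑u : ↥(LinearMap.range (Q : E →ₗ[ℂ] E)) →L[ℂ] ↥(LinearMap.range (Q : E →ₗ[ℂ] E))) = 1 - A := by
        rw [hu]; simp
      rw [h2] at h1
      exact h1
    -- ((1 - A) x : E) = Q (P x)
    have hval : ∀ x : ↥(LinearMap.range (Q : E →ₗ[ℂ] E)), (((1 - A) x : ↥(LinearMap.range (Q : E →ₗ[ℂ] E))) : E)
        = Q (P (x : E)) := by
      intro x
      have h1 : (((1 - A) x : ↥(LinearMap.range (Q : E →ₗ[ℂ] E))) : E) = (x : E) - (A x : E) := by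
        simp [ContinuousLinearMap.sub_apply]
      rw [h1, hA x]
      have h2 : (1 - P) (x : E) = (x : E) - P (x : E) := by
        simp [ContinuousLinearMap.sub_apply]
      rw [h2, map_sub, hQfix _ x.2]
      abel
    have hbound : ∀ x : ↥(LinearMap.range (Q : E →ₗ[ℂ] E)), ‖(x : E)‖ ≤ ‖B‖ * ‖P (x : E)‖ := by
      intro x
      have h1 : ‖x‖ ≤ ‖B‖ * ‖(1 - A) x‖ := by
        conv_lhs => rw [← hBA x]
        exact B.le_opNorm _
      have h2 : ‖(1 - A) x‖ = ‖Q (P (x : E))‖ := by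
        rw [← hval x]; rfl
      have h3 : ‖Q (P (x : E))‖ ≤ ‖P (x : E)‖ := hQle _
      have h4 : ‖(x : E)‖ = ‖x‖ := rfl
      rw [h4]
      refine h1.trans ?_
      rw [h2]
      exact mul_le_mul_of_nonneg_left h3 (norm_nonneg B)
    have hMpos : 0 < ‖B‖ := by
      rcases (norm_nonneg B).lt_or_eq with h | h
      · exact h
      have := hbound ⟨x₀, hx₀mem⟩
      rw [← h, zero_mul] at this
      exact absurd (by simpa using le_antisymm this (norm_nonneg _)) hx₀ne
    apply key ‖B‖⁻¹ (inv_pos.mpr hMpos)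
    intro x hx
    have hb : ‖x‖ ≤ ‖B‖ * ‖P x‖ := hbound ⟨x, hx⟩
    rw [inv_mul_le_iff₀ hMpos]
    exact hb
  -- (2): 1 is not an eigenvalue
  have heig : ∀ x : ↥(LinearMap.range (Q : E →ₗ[ℂ] E)), A x = x → x = 0 := by
    intro x hx
    have h1 : Q ((x : E) - P (x : E)) = (x : E) := by
      have h2 := hA x
      rw [hx] at h2
      rw [show (1 - P) ((x : E)) = (x : E) - P (x : E) by
        simp only [ContinuousLinearMap.sub_apply, ContinuousLinearMap.one_apply]] at h2
      exact h2.symm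
    -- re ⟪x, Q (x - P x)⟫ = ‖x‖² - ‖P x‖², but also = ‖x‖²
    have h3 : RCLike.re (⟪(x : E), Q ((x : E) - P (x : E))⟫ : ℂ)
        = ‖(x : E)‖^2 - ‖P (x : E)‖^2 := by
      rw [← hQsym, hQfix _ x.2, inner_sub_right]
      have h4 : (⟪(x : E), P (x : E)⟫ : ℂ) = ⟪P (x : E), P (x : E)⟫ := by
        rw [hPsym, hPP]
      rw [h4, map_sub, inner_self_eq_norm_sq, inner_self_eq_norm_sq]
    rw [h1, inner_self_eq_norm_sq] at h3
    have h5 : ‖P (x : E)‖^2 = 0 := by linarith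
    have h6 : P (x : E) = 0 := by
      have := sq_eq_zero_iff.mp h5
      simpa using this
    have h7 : (x : E) ∈ (LinearMap.range (P : E →ₗ[ℂ] E))ᗮ ⊓ LinearMap.range (Q : E →ₗ[ℂ] E) :=
      ⟨hkerP _ h6, x.2⟩
    rw [hgen3] at h7
    exact Subtype.ext (by simpa using h7)
  -- (3): injectivity on ran Q
  have hinj : Set.InjOn P (LinearMap.range (Q : E →ₗ[ℂ] E) : Set E) := by
    intro a ha b hb hab
    have h1 : P (a - b) = 0 := by rw [map_sub, hab, sub_self]
    have h2 : a - b ∈ (LinearMap.range (P : E →ₗ[ℂ] E))ᗮ ⊓ LinearMap.range (Q : E →ₗ[ℂ] E) :=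
      ⟨hkerP _ h1, Submodule.sub_mem _ ha hb⟩
    rw [hgen3] at h2
    have : a - b = 0 := by simpa using h2
    exact sub_eq_zero.mp this
  -- closedness of ran P, ran Q
  have hrngP : (LinearMap.range (P : E →ₗ[ℂ] E) : Set E) = {x | P x = x} := by
    ext x
    constructor
    · rintro ⟨y, rfl⟩; exact hPP y
    · intro h; exact ⟨x, h⟩
  have hclosedP : IsClosed (LinearMap.range (P : E →ₗ[ℂ] E) : Set E) := by
    rw [hrngP]; exact isClosed_eq P.continuous continuous_id
  have hclosedQ : IsClosed (LinearMap.range (Q : E →ₗ[ℂ] E) : Set E) := by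
    have hrngQ : (LinearMap.range (Q : E →ₗ[ℂ] E) : Set E) = {x | Q x = x} := by
      ext x
      constructor
      · rintro ⟨y, rfl⟩; exact hQQ y
      · intro h; exact ⟨x, h⟩
    rw [hrngQ]; exact isClosed_eq Q.continuous continuous_id
  haveI hcsP : CompleteSpace ↥(LinearMap.range (P : E →ₗ[ℂ] E)) := hclosedP.completeSpace_coe
  haveI hcsQ : CompleteSpace ↥(LinearMap.range (Q : E →ₗ[ℂ] E)) := hclosedQ.completeSpace_coe
  -- (4): density
  have hclosure : closure (P '' (LinearMap.range (Q : E →ₗ[ℂ] E) : Set E)) = (LinearMap.range (P : E →ₗ[ℂ] E) : Set E) := by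
    set S : Submodule ℂ E := (LinearMap.range (Q : E →ₗ[ℂ] E)).map (P : E →ₗ[ℂ] E) with hS
    have hSset : P '' (LinearMap.range (Q : E →ₗ[ℂ] E) : Set E) = (S : Set E) := by
      rw [hS, Submodule.map_coe]
      rfl
    have hSorth : Sᗮ = (LinearMap.range (P : E →ₗ[ℂ] E))ᗮ := by
      ext x
      simp only [Submodule.mem_orthogonal]
      constructor
      · intro h
        have h1 : Q (P x) = 0 := by
          have h2 : ∀ w : E, (⟪w, Q (P x)⟫ : ℂ) = 0 := by
            intro w
            have h3 : P (Q w) ∈ S := by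
              rw [hS]
              exact Submodule.mem_map_of_mem (LinearMap.mem_range_self _ w)
            have := h _ h3
            rwa [hPsym, hQsym] at this
          have := h2 (Q (P x))
          rwa [inner_self_eq_zero] at this
        have h4 : P x ∈ LinearMap.range (P : E →ₗ[ℂ] E) ⊓ (LinearMap.range (Q : E →ₗ[ℂ] E))ᗮ :=
          ⟨LinearMap.mem_range_self _ x, hkerQorth _ h1⟩
        rw [hgen2] at h4
        have h5 : P x = 0 := by simpa using h4
        rintro _ ⟨v, rfl⟩
        rw [ContinuousLinearMap.coe_coe, hPsym, h5, inner_zero_right]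
      · intro h u hu
        rw [hS] at hu
        obtain ⟨v, hv, rfl⟩ := hu
        exact h _ ⟨v, rfl⟩
    have hSdc : Sᗮᗮ = LinearMap.range (P : E →ₗ[ℂ] E) := by
      rw [hSorth, Submodule.orthogonal_orthogonal]
    rw [hSset, ← Submodule.topologicalClosure_coe, ← Submodule.orthogonal_orthogonal_eq_closure,
      hSdc]
  -- (5): properness
  have hne : P '' (LinearMap.range (Q : E →ₗ[ℂ] E) : Set E) ≠ (LinearMap.range (P : E →ₗ[ℂ] E) : Set E) := by
    intro heq
    set T : ↥(LinearMap.range (Q : E →ₗ[ℂ] E)) →L[ℂ] ↥(LinearMap.range (P : E →ₗ[ℂ] E)) :=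
      (P ∘L (LinearMap.range (Q : E →ₗ[ℂ] E)).subtypeL).codRestrict (LinearMap.range (P : E →ₗ[ℂ] E))
        (fun x => LinearMap.mem_range_self _ _) with hT
    have hTapp : ∀ x : ↥(LinearMap.range (Q : E →ₗ[ℂ] E)), (T x : E) = P (x : E) := fun x => rfl
    have hker : LinearMap.ker (T : ↥(LinearMap.range (Q : E →ₗ[ℂ] E)) →ₗ[ℂ] ↥(LinearMap.range (P : E →ₗ[ℂ] E))) = ⊥ := by
      rw [LinearMap.ker_eq_bot']
      intro x hx
      have h1 : P (x : E) = 0 := by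
        rw [ContinuousLinearMap.coe_coe] at hx
        rw [← hTapp x, hx]; rfl
      have h2 : (x : E) ∈ (LinearMap.range (P : E →ₗ[ℂ] E))ᗮ ⊓ LinearMap.range (Q : E →ₗ[ℂ] E) := ⟨hkerP _ h1, x.2⟩
      rw [hgen3] at h2
      exact Subtype.ext (by simpa using h2)
    have hrange : LinearMap.range (T : ↥(LinearMap.range (Q : E →ₗ[ℂ] E)) →ₗ[ℂ] ↥(LinearMap.range (P : E →ₗ[ℂ] E))) = ⊤ := by
      rw [LinearMap.range_eq_top]
      intro y
      have h1 : (y : E) ∈ P '' (LinearMap.range (Q : E →ₗ[ℂ] E) : Set E) := by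
        rw [heq]; exact y.2
      obtain ⟨x, hx, hPx⟩ := h1
      exact ⟨⟨x, hx⟩, Subtype.ext hPx⟩
    let e := ContinuousLinearEquiv.ofBijective T hker hrange
    set M : ℝ := ‖(e.symm : ↥(LinearMap.range (P : E →ₗ[ℂ] E)) →L[ℂ] ↥(LinearMap.range (Q : E →ₗ[ℂ] E)))‖ with hM
    have hbound : ∀ x : ↥(LinearMap.range (Q : E →ₗ[ℂ] E)), ‖(x : E)‖ ≤ M * ‖P (x : E)‖ := by
      intro x
      have h1 : e.symm (e x) = x := e.symm_apply_apply x
      have h2 : ‖x‖ ≤ M * ‖e x‖ := by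
        calc ‖x‖ = ‖e.symm (e x)‖ := by rw [h1]
          _ ≤ M * ‖e x‖ :=
            (e.symm : ↥(LinearMap.range (P : E →ₗ[ℂ] E)) →L[ℂ] ↥(LinearMap.range (Q : E →ₗ[ℂ] E))).le_opNorm _
      have h3 : ‖e x‖ = ‖P (x : E)‖ := by
        have h4 : e x = T x := rfl
        rw [h4, show ‖T x‖ = ‖(T x : E)‖ from rfl, hTapp]
      rw [h3] at h2
      exact h2
    have hMpos : 0 < M := by
      by_contra h
      push_neg at h
      have hM0 : M = 0 := le_antisymm h (by rw [hM]; exact norm_nonneg _)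
      have := hbound ⟨x₀, hx₀mem⟩
      simp only [hM0, zero_mul] at this
      exact hx₀ne (by simpa using le_antisymm this (norm_nonneg _))
    apply key M⁻¹ (inv_pos.mpr hMpos)
    intro x hx
    have hb : ‖x‖ ≤ M * ‖P x‖ := hbound ⟨x, hx⟩
    rw [inv_mul_le_iff₀ hMpos]
    exact hb
  -- (6): not closed
  have hnotclosed : ¬ IsClosed (P '' (LinearMap.range (Q : E →ₗ[ℂ] E) : Set E)) := by
    intro h
    exact hne (by rw [← h.closure_eq, hclosure])
  exact ⟨hspec, heig, hinj, hclosure, hne, hnotclosed⟩
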